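/- arXiv:1901.08244 — 2 statements merged into one kernel-verified Lean document; each statement's English description precedes it below -/
import Mathlib

section
/- Let C be a positive integer and let p ∈ ℝ^C be a vector whose entries sum to 1 (i.e., 𝟙ᵀp = 1, where 𝟙 ∈ ℝ^C is the all-ones vector). Then the C×C matrix identity (I − 𝟙pᵀ)ᵀ · diag(p) · (I − 𝟙pᵀ) = diag(p) − p pᵀ holds, where I is the C×C identity matrix and diag(p) is the diagonal matrix with the entries of p on its diagonal. -/
open Matrix

/-- Lemma 1 of the paper: for a vector `p ∈ ℝ^C` whose entries sum to 1,
`(I − 𝟙pᵀ)ᵀ · diag(p) · (I − 𝟙pᵀ) = diag(p) − p pᵀ`. -/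
theorem factorization_of_softmax_hessian (C : ℕ) (hC : 0 < C) (p : Fin C → ℝ)
    (hp : ∑ j, p j = 1) :
    (1 - Matrix.vecMulVec (fun _ => (1 : ℝ)) p)ᵀ * Matrix.diagonal p *
        (1 - Matrix.vecMulVec (fun _ => (1 : ℝ)) p) =
      Matrix.diagonal p - Matrix.vecMulVec p p := by
  have h1 : (Matrix.vecMulVec (fun _ => (1 : ℝ)) p)ᵀ * Matrix.diagonal p =
      Matrix.vecMulVec p p := by
    ext i j
    simp [mul_apply, vecMulVec_apply, diagonal, Finset.sum_ite_eq, mul_comm]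
  have h2 : Matrix.diagonal p * Matrix.vecMulVec (fun _ => (1 : ℝ)) p =
      Matrix.vecMulVec p p := by
    ext i j
    simp [mul_apply, vecMulVec_apply, diagonal, Finset.sum_ite_eq]
  have h3 : Matrix.vecMulVec p p * Matrix.vecMulVec (fun _ => (1 : ℝ)) p =
      Matrix.vecMulVec p p := by
    ext i j
    simp [mul_apply, vecMulVec_apply, ← Finset.sum_mul, ← Finset.mul_sum, hp]
  rw [transpose_sub, transpose_one, sub_mul, one_mul, sub_mul, h1, mul_sub,
    mul_sub, mul_one, mul_one, h2, h3]
  abel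
end

section
/- Let C ≥ 2, m, p be positive integers and let δ_{i,c,c'} ∈ ℝ^p be given vectors for i ∈ {1,…,m}, c ∈ {1,…,C}, c' ∈ {1,…,C}. Define G = (1/(C·m)) Σ_c Σ_i Σ_{c'} δ_{i,c,c'} δ_{i,c,c'}ᵀ; group means δ_{c,c'} = (1/m) Σ_i δ_{i,c,c'}; group covariances Σ_{c,c'} = (1/m) Σ_i (δ_{i,c,c'} − δ_{c,c'})(δ_{i,c,c'} − δ_{c,c'})ᵀ; cluster centers δ_c = (1/(C−1)) Σ_{c'≠c} δ_{c,c'}; and cluster covariances Σ_c = (1/(C−1)) Σ_{c'≠c} (δ_{c,c'} − δ_c)(δ_{c,c'} − δ_c)ᵀ. Then G = G_0 + G_1 + G_2 + G_3, where G_0 = (1/C) Σ_c δ_{c,c} δ_{c,c}ᵀ, G_1 = ((C−1)/C) Σ_c δ_c δ_cᵀ, G_2 = ((C−1)/C) Σ_c Σ_c (i.e., (C−1)·Ave_c{Σ_c}), and G_3 = (1/C) Σ_c Σ_{c'} Σ_{c,c'}. -/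
open Matrix

lemma vecMulVec_center_sum {α : Type*} {p : ℕ} (s : Finset α) (f : α → Fin p → ℝ)
    (a : Fin p → ℝ) (ha : ∀ i, ∑ x ∈ s, f x i = (s.card : ℝ) * a i) :
    ∑ x ∈ s, Matrix.vecMulVec (f x - a) (f x - a)
      = (∑ x ∈ s, Matrix.vecMulVec (f x) (f x)) - (s.card : ℝ) • Matrix.vecMulVec a a := by
  ext i j
  simp only [Matrix.sum_apply, Matrix.sub_apply, Matrix.smul_apply, Matrix.vecMulVec_apply,
    Pi.sub_apply, smul_eq_mul]
  have h1 := ha i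
  have h2 := ha j
  have hexp : ∀ x ∈ s, (f x i - a i) * (f x j - a j)
      = f x i * f x j - a i * f x j - f x i * a j + a i * a j := by intros; ring
  rw [Finset.sum_congr rfl hexp, Finset.sum_add_distrib, Finset.sum_sub_distrib,
    Finset.sum_sub_distrib, ← Finset.mul_sum, ← Finset.sum_mul, h1, h2, Finset.sum_const,
    nsmul_eq_mul]
  ring

/-- Three-level hierarchical decomposition `G = G₀ + G₁ + G₂ + G₃` (Eq. 23 of the
paper) of the second moment matrix of the logit derivatives, where `G₀` is the Gram of
the diagonal means `δ_{c,c}`, `G₁` is the between-cluster term (Gram of the cluster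
centers `δ_c`), `G₂` is the within-cluster term, and `G₃` is the within-group term. -/
theorem three_level_hierarchical_decomposition (C m p : ℕ) (hC : 2 ≤ C) (hm : 0 < m)
    (hp : 0 < p)
    (δ : Fin m → Fin C → Fin C → (Fin p → ℝ))
    (G : Matrix (Fin p) (Fin p) ℝ)
    (hG : G = ((C * m : ℝ))⁻¹ •
        ∑ c : Fin C, ∑ i : Fin m, ∑ c' : Fin C, Matrix.vecMulVec (δ i c c') (δ i c c'))
    (δbar : Fin C → Fin C → (Fin p → ℝ))
    (hδbar : ∀ c c', δbar c c' = (m : ℝ)⁻¹ • ∑ i : Fin m, δ i c c')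
    (Sg : Fin C → Fin C → Matrix (Fin p) (Fin p) ℝ)
    (hSg : ∀ c c', Sg c c' = (m : ℝ)⁻¹ •
        ∑ i : Fin m, Matrix.vecMulVec (δ i c c' - δbar c c') (δ i c c' - δbar c c'))
    (δctr : Fin C → (Fin p → ℝ))
    (hδctr : ∀ c, δctr c = ((C : ℝ) - 1)⁻¹ • ∑ c' ∈ Finset.univ.erase c, δbar c c')
    (Sc : Fin C → Matrix (Fin p) (Fin p) ℝ)
    (hSc : ∀ c, Sc c = ((C : ℝ) - 1)⁻¹ •
        ∑ c' ∈ Finset.univ.erase c,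
          Matrix.vecMulVec (δbar c c' - δctr c) (δbar c c' - δctr c)) :
    G = (C : ℝ)⁻¹ • (∑ c : Fin C, Matrix.vecMulVec (δbar c c) (δbar c c))
        + (((C : ℝ) - 1) / C) • (∑ c : Fin C, Matrix.vecMulVec (δctr c) (δctr c))
        + (((C : ℝ) - 1) / C) • (∑ c : Fin C, Sc c)
        + (C : ℝ)⁻¹ • ∑ c : Fin C, ∑ c' : Fin C, Sg c c' := by
  have hCpos : (0:ℝ) < C := by exact_mod_cast lt_of_lt_of_le (by norm_num) hC
  have hC0 : (C:ℝ) ≠ 0 := ne_of_gt hCpos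
  have hm0 : (m:ℝ) ≠ 0 := by exact_mod_cast hm.ne'
  have hC1 : (C:ℝ) - 1 ≠ 0 := by
    have : (2:ℝ) ≤ C := by exact_mod_cast hC
    linarith
  have hcard : ∀ c : Fin C, ((Finset.univ.erase c).card : ℝ) = (C:ℝ) - 1 := by
    intro c
    have h1 : 1 ≤ C := le_trans (by norm_num) hC
    rw [Finset.card_erase_of_mem (Finset.mem_univ c), Finset.card_univ, Fintype.card_fin,
      Nat.cast_sub h1, Nat.cast_one]
  -- within-group identity
  have hgroup : ∀ c c' : Fin C, ∑ i : Fin m, Matrix.vecMulVec (δ i c c') (δ i c c')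
      = (m:ℝ) • Sg c c' + (m:ℝ) • Matrix.vecMulVec (δbar c c') (δbar c c') := by
    intro c c'
    have ha : ∀ j, ∑ i : Fin m, δ i c c' j = ((Finset.univ : Finset (Fin m)).card : ℝ) * δbar c c' j := by
      intro j
      rw [hδbar]
      simp only [Pi.smul_apply, Finset.sum_apply, smul_eq_mul, Finset.card_univ,
        Fintype.card_fin]
      rw [← mul_assoc, mul_inv_cancel₀ hm0, one_mul]
    have h := vecMulVec_center_sum (Finset.univ : Finset (Fin m)) (fun i => δ i c c') (δbar c c') ha
    rw [hSg, h]
    simp only [Finset.card_univ, Fintype.card_fin]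
    rw [smul_smul, mul_inv_cancel₀ hm0, one_smul, sub_add_cancel]
  -- within-cluster identity
  have hcluster : ∀ c : Fin C, ∑ c' ∈ Finset.univ.erase c, Matrix.vecMulVec (δbar c c') (δbar c c')
      = ((C:ℝ) - 1) • Sc c + ((C:ℝ) - 1) • Matrix.vecMulVec (δctr c) (δctr c) := by
    intro c
    have ha : ∀ j, ∑ c' ∈ Finset.univ.erase c, δbar c c' j
        = ((Finset.univ.erase c).card : ℝ) * δctr c j := by
      intro j
      rw [hδctr, hcard]
      simp only [Pi.smul_apply, Finset.sum_apply, smul_eq_mul]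
      rw [← mul_assoc, mul_inv_cancel₀ hC1, one_mul]
    have h := vecMulVec_center_sum (Finset.univ.erase c) (fun c' => δbar c c') (δctr c) ha
    rw [hSc, h, hcard]
    rw [smul_smul, mul_inv_cancel₀ hC1, one_smul, sub_add_cancel]
  -- assemble
  rw [hG]
  have hsplit : ∀ c : Fin C, ∑ i : Fin m, ∑ c' : Fin C, Matrix.vecMulVec (δ i c c') (δ i c c')
      = ∑ c' : Fin C, ∑ i : Fin m, Matrix.vecMulVec (δ i c c') (δ i c c') := fun c =>
    Finset.sum_comm
  calc ((C * m : ℝ))⁻¹ • ∑ c : Fin C, ∑ i : Fin m, ∑ c' : Fin C,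
        Matrix.vecMulVec (δ i c c') (δ i c c')
      = ((C * m : ℝ))⁻¹ • ∑ c : Fin C, ∑ c' : Fin C,
          ((m:ℝ) • Sg c c' + (m:ℝ) • Matrix.vecMulVec (δbar c c') (δbar c c')) := by
        rw [Finset.sum_congr rfl (fun c _ => (hsplit c).trans
          (Finset.sum_congr rfl (fun c' _ => hgroup c c')))]
    _ = (C:ℝ)⁻¹ • ∑ c : Fin C, ∑ c' : Fin C, Sg c c'
        + (C:ℝ)⁻¹ • ∑ c : Fin C, ∑ c' : Fin C, Matrix.vecMulVec (δbar c c') (δbar c c') := by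
        simp only [Finset.sum_add_distrib, ← Finset.smul_sum, smul_add, smul_smul]
        rw [mul_inv]
        congr 2 <;> · field_simp
    _ = _ := by
        have hrow : ∀ c : Fin C, ∑ c' : Fin C, Matrix.vecMulVec (δbar c c') (δbar c c')
            = Matrix.vecMulVec (δbar c c) (δbar c c)
              + (((C:ℝ) - 1) • Sc c + ((C:ℝ) - 1) • Matrix.vecMulVec (δctr c) (δctr c)) := by
          intro c
          rw [← Finset.add_sum_erase _ _ (Finset.mem_univ c), hcluster]
        rw [Finset.sum_congr rfl (fun c _ => hrow c)]
        simp only [Finset.sum_add_distrib, smul_add, ← Finset.smul_sum, smul_smul]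
        rw [show ((C:ℝ)-1)/C = (C:ℝ)⁻¹ * ((C:ℝ)-1) by ring]
        abel
end
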